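/- If G is an infinite group with exactly two conjugacy classes, then the only invariant group ideal on G is the ideal P(G) of all subsets of G; hence there is only one group coarse structure on G. -/

import Mathlib

/-- A *coarse structure* on `X`: every entourage contains the diagonal, and the family
is closed under composition, inversion, and passing to subsets containing the diagonal. -/
def IsCoarseStructure {X : Type*} (E : Set (Set (X × X))) : Prop :=
  (∀ ε ∈ E, ∀ x : X, (x, x) ∈ ε) ∧
  (∀ ε ∈ E, ∀ δ ∈ E, {p : X × X | ∃ z : X, (p.1, z) ∈ ε ∧ (z, p.2) ∈ δ} ∈ E) ∧
  (∀ ε ∈ E, {p : X × X | (p.2, p.1) ∈ ε} ∈ E) ∧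
  (∀ ε ∈ E, ∀ ε' ⊆ ε, (∀ x : X, (x, x) ∈ ε') → ε' ∈ E)

/-- A family `I` of subsets of a group `G` is a *group ideal*. -/
def IsGroupIdeal {G : Type*} [Group G] (I : Set (Set G)) : Prop :=
  (∀ A ∈ I, ∀ B ⊆ A, B ∈ I) ∧
  (∀ A ∈ I, ∀ B ∈ I, A ∪ B ∈ I) ∧
  (∀ A : Set G, A.Finite → A ∈ I) ∧
  (∀ A ∈ I, ∀ B ∈ I, {x : G | ∃ a ∈ A, ∃ b ∈ B, x = a * b⁻¹} ∈ I)

/-- The entourage `ε_A = {(x, g•x) : x ∈ X, g ∈ A}` determined by `A ⊆ G`. -/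
def entourageOf {G X : Type*} [Group G] [MulAction G X] (A : Set G) : Set (X × X) :=
  {p : X × X | ∃ g ∈ A, p.2 = g • p.1}

/-- The coarse structure `E(G, I, X)` induced on a `G`-space `X` by a group ideal `I`:
all diagonal-containing subsets of some `ε_A` with `A ∈ I`, `1 ∈ A`. -/
def actionCoarse (G : Type*) [Group G] (I : Set (Set G)) (X : Type*) [MulAction G X] :
    Set (Set (X × X)) :=
  {ε | (∀ x : X, (x, x) ∈ ε) ∧ ∃ A ∈ I, (1 : G) ∈ A ∧ ε ⊆ entourageOf A}

/-- `E_I`: the coarse structure on `G` induced by the left action of `G` on itself. -/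
def idealCoarse {G : Type*} [Group G] (I : Set (Set G)) : Set (Set (G × G)) :=
  actionCoarse G I G

/-- The ball `B(x, ε)`. -/
def ball {X : Type*} (ε : Set (X × X)) (x : X) : Set X := {y : X | (x, y) ∈ ε}


/-- `f` is a *coarse (bornologous) mapping* from `(X, EX)` to `(Y, EY)`. -/
def IsCoarseMap {X Y : Type*} (EX : Set (Set (X × X))) (EY : Set (Set (Y × Y)))
    (f : X → Y) : Prop :=
  ∀ ε ∈ EX, ∃ δ ∈ EY, ∀ p ∈ ε, (f p.1, f p.2) ∈ δ

/-- The product coarse structure on `X × Y`, with base the componentwise products of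
entourages. -/
def prodCoarse {X Y : Type*} (EX : Set (Set (X × X))) (EY : Set (Set (Y × Y))) :
    Set (Set ((X × Y) × (X × Y))) :=
  {η | (∀ q : X × Y, (q, q) ∈ η) ∧ ∃ ε ∈ EX, ∃ δ ∈ EY,
    η ⊆ {p : (X × Y) × (X × Y) | (p.1.1, p.2.1) ∈ ε ∧ (p.1.2, p.2.2) ∈ δ}}

/-- `(G, E)` is a *coarse group*: the multiplication and inversion are coarse maps. -/
def IsCoarseGroup {G : Type*} [Group G] (E : Set (Set (G × G))) : Prop :=
  IsCoarseMap (prodCoarse E E) E (fun p => p.1 * p.2) ∧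
  IsCoarseMap E E (fun x : G => x⁻¹)

/-- `(G, E)` is a *left coarse group*. -/
def IsLeftCoarseGroup {G : Type*} [Group G] (E : Set (Set (G × G))) : Prop :=
  ∀ ε ∈ E, ∃ ε' ∈ E, ∀ g x y : G, (x, y) ∈ ε → (g * x, g * y) ∈ ε'

/-- `(G, E)` is a *right coarse group*. -/
def IsRightCoarseGroup {G : Type*} [Group G] (E : Set (Set (G × G))) : Prop :=
  ∀ ε ∈ E, ∃ ε' ∈ E, ∀ g x y : G, (x, y) ∈ ε → (x * g, y * g) ∈ ε'

/-- A coarse structure is *connected* if any two points are related by some entourage. -/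
def IsConnectedCoarse {X : Type*} (E : Set (Set (X × X))) : Prop :=
  ∀ x y : X, ∃ ε ∈ E, (x, y) ∈ ε

/-- A group ideal `I` is *invariant* if `⋃_{g ∈ G} g⁻¹ A g ∈ I` for each `A ∈ I`. -/
def IsInvariantIdeal {G : Type*} [Group G] (I : Set (Set G)) : Prop :=
  ∀ A ∈ I, {x : G | ∃ g : G, ∃ a ∈ A, x = g⁻¹ * a * g} ∈ I


theorem aux_ideal_univ {G : Type*} [Group G] [Infinite G]
    (hconj : ∀ g h : G, g ≠ 1 → h ≠ 1 → IsConj g h)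
    (I : Set (Set G)) (hI : IsGroupIdeal I) (hinv : IsInvariantIdeal I) :
    ∀ A : Set G, A ∈ I := by
  obtain ⟨hsub, hun, hfin, _⟩ := hI
  obtain ⟨g, hg⟩ := exists_ne (1 : G)
  have h1 : ({g} : Set G) ∈ I := hfin _ (Set.finite_singleton g)
  have h2 := hinv _ h1
  have h3 : ({1} : Set G) ∈ I := hfin _ (Set.finite_singleton 1)
  have h4 := hun _ h2 _ h3
  intro A
  refine hsub _ h4 A ?_
  intro x _
  by_cases hx : x = 1
  · right; exact hx
  · left
    obtain ⟨c, hc⟩ := hconj g x hg hx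
    refine ⟨c⁻¹, g, rfl, ?_⟩
    have : c * g = x * c := hc
    group
    rw [this]
    group

theorem aux_coarse_max {G : Type*} [Group G] [Infinite G]
    (hconj : ∀ g h : G, g ≠ 1 → h ≠ 1 → IsConj g h)
    (E : Set (Set (G × G))) (hE : IsCoarseStructure E)
    (hconn : IsConnectedCoarse E) (hgrp : IsCoarseGroup E) :
    E = {ε : Set (G × G) | ∀ x : G, (x, x) ∈ ε} := by
  obtain ⟨hdiag, hcomp, hsym, hsubE⟩ := hE
  obtain ⟨hmulc, hinvc⟩ := hgrp
  -- closure under binary unions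
  have hunion : ∀ ε ∈ E, ∀ δ ∈ E, ε ∪ δ ∈ E := by
    intro ε hε δ hδ
    refine hsubE _ (hcomp ε hε δ hδ) _ ?_ ?_
    · rintro ⟨x, y⟩ (h | h)
      · exact ⟨y, h, hdiag δ hδ y⟩
      · exact ⟨x, hdiag ε hε x, h⟩
    · intro x; left; exact hdiag ε hε x
  -- uniform right translation
  have hright : ∀ ε ∈ E, ∃ ζ ∈ E, ∀ x y g : G, (x, y) ∈ ε → (x * g, y * g) ∈ ζ := by
    intro ε hε
    have hη : ({p : (G × G) × (G × G) | (p.1.1, p.2.1) ∈ ε ∧ p.1.2 = p.2.2}) ∈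
        prodCoarse E E := by
      refine ⟨fun q => ⟨hdiag ε hε q.1, rfl⟩, ε, hε, ε, hε, ?_⟩
      rintro ⟨⟨x, u⟩, ⟨y, v⟩⟩ ⟨h1, h2⟩
      exact ⟨h1, h2 ▸ hdiag ε hε u⟩
    obtain ⟨ζ, hζ, hζ2⟩ := hmulc _ hη
    exact ⟨ζ, hζ, fun x y g h => hζ2 ((x, g), (y, g)) ⟨h, rfl⟩⟩
  -- uniform left translation
  have hleft : ∀ ε ∈ E, ∃ ζ ∈ E, ∀ x y g : G, (x, y) ∈ ε → (g * x, g * y) ∈ ζ := by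
    intro ε hε
    have hη : ({p : (G × G) × (G × G) | p.1.1 = p.2.1 ∧ (p.1.2, p.2.2) ∈ ε}) ∈
        prodCoarse E E := by
      refine ⟨fun q => ⟨rfl, hdiag ε hε q.2⟩, ε, hε, ε, hε, ?_⟩
      rintro ⟨⟨u, x⟩, ⟨v, y⟩⟩ ⟨h1, h2⟩
      exact ⟨h1 ▸ hdiag ε hε u, h2⟩
    obtain ⟨ζ, hζ, hζ2⟩ := hmulc _ hη
    exact ⟨ζ, hζ, fun x y g h => hζ2 ((g, x), (g, y)) ⟨rfl, h⟩⟩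
  -- the ideal of E
  set I : Set (Set G) := {A | ∃ ε ∈ E, ∀ a ∈ A, ((1 : G), a) ∈ ε} with hIdef
  have hEne : ∃ ε, ε ∈ E := by obtain ⟨ε, hε, _⟩ := hconn 1 1; exact ⟨ε, hε⟩
  have hIdeal : IsGroupIdeal I := by
    refine ⟨?_, ?_, ?_, ?_⟩
    · rintro A ⟨ε, hε, hA⟩ B hBA
      exact ⟨ε, hε, fun b hb => hA b (hBA hb)⟩
    · rintro A ⟨ε, hε, hA⟩ B ⟨δ, hδ, hB⟩
      refine ⟨ε ∪ δ, hunion ε hε δ hδ, ?_⟩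
      rintro a (h | h)
      · exact Or.inl (hA a h)
      · exact Or.inr (hB a h)
    · intro A hA
      refine Set.Finite.induction_on (motive := fun s _ => s ∈ I) A hA ?_ ?_
      · obtain ⟨ε, hε⟩ := hEne
        exact ⟨ε, hε, fun a ha => absurd ha (Set.notMem_empty a)⟩
      · rintro a s _ _ ⟨ε, hε, hs⟩
        obtain ⟨δ, hδ, hδa⟩ := hconn 1 a
        refine ⟨ε ∪ δ, hunion ε hε δ hδ, ?_⟩
        rintro b (rfl | hb)
        · exact Or.inr hδa
        · exact Or.inl (hs b hb)
    · rintro A ⟨ε, hε, hA⟩ B ⟨δ, hδ, hB⟩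
      obtain ⟨δ', hδ', hδ'2⟩ := hinvc δ hδ
      have hη : ({p : (G × G) × (G × G) | (p.1.1, p.2.1) ∈ ε ∧ (p.1.2, p.2.2) ∈ δ'})
          ∈ prodCoarse E E := by
        exact ⟨fun q => ⟨hdiag ε hε q.1, hdiag δ' hδ' q.2⟩, ε, hε, δ', hδ',
          fun p hp => hp⟩
      obtain ⟨ζ, hζ, hζ2⟩ := hmulc _ hη
      refine ⟨ζ, hζ, ?_⟩
      rintro x ⟨a, ha, b, hb, rfl⟩
      have h1 : ((1 : G), b⁻¹) ∈ δ' := by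
        have := hδ'2 (1, b) (hB b hb)
        simpa using this
      have := hζ2 ((1, 1), (a, b⁻¹)) ⟨hA a ha, h1⟩
      simpa using this
  have hInv : IsInvariantIdeal I := by
    rintro A ⟨ε, hε, hA⟩
    obtain ⟨ζr, hζr, hr⟩ := hright ε hε
    obtain ⟨ζl, hζl, hl⟩ := hleft ζr hζr
    refine ⟨ζl, hζl, ?_⟩
    rintro x ⟨g, a, ha, rfl⟩
    have h1 : ((1 : G) * g, a * g) ∈ ζr := hr 1 a g (hA a ha)
    have h2 : (g⁻¹ * (1 * g), g⁻¹ * (a * g)) ∈ ζl := hl _ _ g⁻¹ h1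
    have e1 : g⁻¹ * (1 * g) = 1 := by group
    have e2 : g⁻¹ * (a * g) = g⁻¹ * a * g := by group
    rwa [e1, e2] at h2
  -- conclude univ ∈ E
  obtain ⟨ε₀, hε₀, hε₀2⟩ := aux_ideal_univ hconj I hIdeal hInv Set.univ
  have hε₀' := hsym ε₀ hε₀
  have hcompε := hcomp _ hε₀' ε₀ hε₀
  have huniv : (Set.univ : Set (G × G)) ∈ E := by
    have heq : {p : G × G | ∃ z : G, (p.1, z) ∈ {p : G × G | (p.2, p.1) ∈ ε₀} ∧
        (z, p.2) ∈ ε₀} = Set.univ := by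
      ext ⟨x, y⟩
      simp only [Set.mem_setOf_eq, Set.mem_univ, iff_true]
      exact ⟨1, hε₀2 x (Set.mem_univ x), hε₀2 y (Set.mem_univ y)⟩
    rwa [heq] at hcompε
  ext ε
  constructor
  · intro hε; exact hdiag ε hε
  · intro hε
    exact hsubE _ huniv ε (Set.subset_univ ε) hε

/-- If `G` is an infinite group with exactly two conjugacy classes (all nonidentity
elements are conjugate), then the only invariant group ideal on `G` is the ideal of all
subsets of `G`; hence there is only one (connected) group coarse structure on `G`. -/
theorem unique_group_coarse_structure_of_two_conjugacy_classes {G : Type*} [Group G]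
    [Infinite G] (hconj : ∀ g h : G, g ≠ 1 → h ≠ 1 → IsConj g h) :
    (∀ I : Set (Set G), IsGroupIdeal I → IsInvariantIdeal I → ∀ A : Set G, A ∈ I) ∧
    (∀ E₁ E₂ : Set (Set (G × G)),
      IsCoarseStructure E₁ → IsConnectedCoarse E₁ → IsCoarseGroup E₁ →
      IsCoarseStructure E₂ → IsConnectedCoarse E₂ → IsCoarseGroup E₂ → E₁ = E₂) := by
  constructor
  · exact fun I hI hinv A => aux_ideal_univ hconj I hI hinv A
  · intro E₁ E₂ h1 h2 h3 h4 h5 h6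
    rw [aux_coarse_max hconj E₁ h1 h2 h3, aux_coarse_max hconj E₂ h4 h5 h6]
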